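/- For every positive integer d, the sequence W = {dk + 1}_{k=1}^∞ in the multiplicative semigroup of positive integers congruent to 1 modulo d has many partition products; that is, with W_r(n) the set of products (dk₁+1)(dk₂+1)⋯(dk_r+1) over positive integers k₁ ≥ ⋯ ≥ k_r with k₁ + ⋯ + k_r ≤ n and Φ(r) = liminf_{n→∞} (log card(W_r(n)))/(log n), one has lim_{r→∞} Φ(r) = ∞. -/

import Mathlib

open Filter

/-- `W_r(n)`: the set of products `w_{k₁} ∗ ⋯ ∗ w_{k_r}` over positive integers
`k₁ ≥ k₂ ≥ ⋯ ≥ k_r` with `k₁ + ⋯ + k_r ≤ n` (products of nonempty lists in a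
semigroup, formed by left folding). -/
def WrSet {X : Type*} [Mul X] (w : ℕ → X) (r n : ℕ) : Set X :=
  {x : X | ∃ k : ℕ, ∃ l : List ℕ, (k :: l).length = r ∧ (∀ m ∈ k :: l, 1 ≤ m) ∧
    (k :: l).sum ≤ n ∧ List.Pairwise (· ≥ ·) (k :: l) ∧
    x = List.foldl (· * ·) (w k) (l.map w)}

/-- `Φ(r) = liminf_{n→∞} (log card W_r(n)) / (log n)`. -/
noncomputable def Phi {X : Type*} [Mul X] (w : ℕ → X) (r : ℕ) : ℝ :=
  Filter.liminf
    (fun n : ℕ => Real.log (Set.ncard (WrSet w r n)) / Real.log n) Filter.atTop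

/-- The sequence `{w_k}` has many partition products: `lim_{r→∞} Φ(r) = ∞`. -/
def ManyPartitionProducts {X : Type*} [Mul X] (w : ℕ → X) : Prop :=
  Filter.Tendsto (Phi w) Filter.atTop Filter.atTop

/-- for every positive integer `d`, the sequence `{dk + 1}_{k≥1}` in
the multiplicative semigroup of positive integers congruent to `1 mod d` has many
partition products: with `W_r(n)` the set of products `(dk₁+1)⋯(dk_r+1)` over
positive integers `k₁ ≥ ⋯ ≥ k_r` with `k₁ + ⋯ + k_r ≤ n`, one has
`lim_{r→∞} Φ(r) = ∞`. -/
-- L1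
lemma aux1 : ∀ c : ℕ, 3 ≤ c → 2*c + 2 ≤ 2^c := by
  intro c hc
  induction c with
  | zero => omega
  | succ n ih =>
    rcases Nat.lt_or_ge n 3 with h | h
    · interval_cases n <;> simp_all <;> omega
    · have := ih h
      have : 2^n ≥ 8 := by calc 2^n ≥ 2^3 := Nat.pow_le_pow_right (by norm_num) h
                                _ = 8 := rfl
      rw [pow_succ]; omega

-- L2
lemma aux2 (m b : ℕ) (hb6 : 6 ≤ b) (hbm : 2*m ≤ b) : m*(b+1) ≤ 2^b := by
  have h1 : m ≤ b - b/2 := by omega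
  have h2 : 3 ≤ b/2 := by omega
  have hm : m ≤ 2^(b - b/2) := le_trans (Nat.le_of_lt ((Nat.lt_two_pow_self (n := m)))) (Nat.pow_le_pow_right (by norm_num) h1)
  have hb : b + 1 ≤ 2^(b/2) := by
    have := aux1 (b/2) h2; omega
  calc m*(b+1) ≤ 2^(b - b/2) * 2^(b/2) := Nat.mul_le_mul hm hb
    _ = 2^b := by rw [← pow_add]; congr 1; omega

-- L3
lemma aux3 (m a : ℕ) (hm : 1 ≤ m) : (a+1)^m ≤ 64^(m*m) * 2^a := by
  rcases Nat.lt_or_ge a (64^m) with h | h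
  · calc (a+1)^m ≤ (64^m)^m := Nat.pow_le_pow_left (by omega) m
      _ = 64^(m*m) := by rw [← pow_mul]
      _ ≤ 64^(m*m) * 2^a := Nat.le_mul_of_pos_right _ (Nat.pow_pos (by norm_num))
  · -- a ≥ 64^m
    set b := a / m with hb
    have h64m : 64*m ≤ 64^m := by
      clear h hb
      induction m with
      | zero => omega
      | succ n ih =>
        rcases Nat.eq_or_lt_of_le hm with h1 | h1
        · simp [← h1]
        · have hn : 1 ≤ n := by omega
          have := ih hn
          calc 64*(n+1) ≤ 64*(64*n) := by nlinarith
            _ ≤ 64*64^n := by nlinarith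
            _ = 64^(n+1) := by ring
    have h2m2 : 2*m*m ≤ 64^m := by
      clear h hb h64m
      induction m with
      | zero => omega
      | succ n ih =>
        rcases Nat.eq_or_lt_of_le hm with h1 | h1
        · simp [← h1]
        · have hn : 1 ≤ n := by omega
          have := ih hn
          have : 64^n ≥ 64 := by calc 64^n ≥ 64^1 := Nat.pow_le_pow_right (by norm_num) hn
                                      _ = 64 := pow_one _
          calc 2*(n+1)*(n+1) ≤ 4*(2*n*n) := by nlinarith
            _ ≤ 4*64^n := by omega
            _ ≤ 64^(n+1) := by rw [pow_succ]; omega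
    have hb6 : 6 ≤ b := by
      have : 64 ≤ a/m := (Nat.le_div_iff_mul_le (by omega)).2 (by omega)
      omega
    have hb2m : 2*m ≤ b := by
      have : 2*m ≤ a/m := (Nat.le_div_iff_mul_le (by omega)).2 (by nlinarith [h2m2])
      omega
    have key : a + 1 ≤ m*(b+1) := by
      have h1 := Nat.div_add_mod a m
      have h2 := Nat.mod_lt a (show 0 < m by omega)
      have e : m*(b+1) = m*(a/m) + m := by rw [hb]; ring
      omega
    have : (a+1)^m ≤ (2^b)^m := Nat.pow_le_pow_left (le_trans key (aux2 m b hb6 hb2m)) m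
    calc (a+1)^m ≤ (2^b)^m := this
      _ = 2^(b*m) := by rw [← pow_mul]
      _ ≤ 2^a := Nat.pow_le_pow_right (by norm_num) (by rw [hb]; exact Nat.div_mul_le_self a m)
      _ ≤ 64^(m*m) * 2^a := Nat.le_mul_of_pos_left _ (Nat.pow_pos (by norm_num))

-- divisor bound: τ(P)^m ≤ C_m * P
lemma tau_pow (m P : ℕ) (hm : 1 ≤ m) (hP : P ≠ 0) :
    P.divisors.card ^ m ≤ 64^(m*m*2^m) * P := by
  have hcd := Nat.card_divisors hP
  rw [hcd]
  set S := P.primeFactors with hS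
  have hprod : ∏ p ∈ S, p ^ P.factorization p = P := by
    conv_rhs => rw [← Nat.factorization_prod_pow_eq_self hP]
    rw [Finsupp.prod, Nat.support_factorization]
  have point : ∀ p ∈ S, (P.factorization p + 1)^m ≤
      (if p < 2^m then 64^(m*m) else 1) * p ^ P.factorization p := by
    intro p hp
    have hprime : p.Prime := Nat.prime_of_mem_primeFactors hp
    have h2 : 2 ≤ p := hprime.two_le
    set a := P.factorization p
    by_cases hcase : p < 2^m
    · simp only [hcase, if_pos]
      calc (a+1)^m ≤ 64^(m*m) * 2^a := aux3 m a hm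
        _ ≤ 64^(m*m) * p^a := Nat.mul_le_mul_left _ (Nat.pow_le_pow_left h2 a)
    · simp only [hcase, if_neg, not_false_iff, one_mul]
      calc (a+1)^m ≤ (2^a)^m := Nat.pow_le_pow_left (by have := (Nat.lt_two_pow_self (n := a)); omega) m
        _ = (2^m)^a := by rw [← pow_mul, ← pow_mul, Nat.mul_comm]
        _ ≤ p^a := Nat.pow_le_pow_left (Nat.le_of_not_lt hcase) a
  calc (∏ p ∈ S, (P.factorization p + 1))^m
      = ∏ p ∈ S, (P.factorization p + 1)^m := by rw [← Finset.prod_pow]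
    _ ≤ ∏ p ∈ S, ((if p < 2^m then 64^(m*m) else 1) * p ^ P.factorization p) :=
        Finset.prod_le_prod' point
    _ = (∏ p ∈ S, (if p < 2^m then 64^(m*m) else 1)) * ∏ p ∈ S, p ^ P.factorization p :=
        Finset.prod_mul_distrib
    _ ≤ 64^(m*m*2^m) * P := by
        rw [hprod]
        apply Nat.mul_le_mul_right
        calc ∏ p ∈ S, (if p < 2^m then 64^(m*m) else 1)
            = ∏ p ∈ S.filter (· < 2^m), 64^(m*m) := by
              rw [Finset.prod_ite]
              simp
          _ = (64^(m*m))^(S.filter (· < 2^m)).card := by rw [Finset.prod_const]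
          _ ≤ (64^(m*m))^(2^m) := by
              apply Nat.pow_le_pow_right (Nat.pow_pos (by norm_num))
              calc (S.filter (· < 2^m)).card ≤ (Finset.range (2^m)).card := by
                    apply Finset.card_le_card
                    intro x hx
                    simp only [Finset.mem_filter] at hx
                    exact Finset.mem_range.2 hx.2
                _ = 2^m := Finset.card_range _
          _ = 64^(m*m*2^m) := by rw [← pow_mul]

lemma foldl_mul_eq (a : ℕ) (l : List ℕ) : List.foldl (· * ·) a l = a * l.prod := by
  induction l generalizing a with
  | nil => simp
  | cons b t ih => simp [ih, mul_assoc]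

-- membership of subset-products in WrSet
lemma mem_WrSet_of_subset {d r n M : ℕ} (hr : 1 ≤ r) (hM : r * M ≤ n)
    (s : Finset ℕ) (hs : s ∈ Finset.powersetCard r (Finset.Icc 1 M)) :
    (∏ k ∈ s, (d*k+1)) ∈ WrSet (fun k : ℕ => d * k + 1) r n := by
  obtain ⟨hsub, hcard⟩ := Finset.mem_powersetCard.1 hs
  set L := s.sort (· ≥ ·) with hL
  have hlen : L.length = r := by rw [hL, Finset.length_sort, hcard]
  have hne : L ≠ [] := by
    intro h; rw [h] at hlen; simp at hlen; omega
  obtain ⟨k, l, hkl⟩ := List.exists_cons_of_ne_nil hne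
  have hmemL : ∀ x ∈ L, x ∈ s := by intro x hx; exact (Finset.mem_sort _).1 hx
  refine ⟨k, l, ?_, ?_, ?_, ?_, ?_⟩
  · rw [← hkl]; exact hlen
  · intro m hm
    have := hmemL m (by rw [hkl]; exact hm)
    exact (Finset.mem_Icc.1 (hsub this)).1
  · have hbound : ∀ x ∈ (k :: l), x ≤ M := by
      intro x hx
      have := hmemL x (by rw [hkl]; exact hx)
      exact (Finset.mem_Icc.1 (hsub this)).2
    calc (k :: l).sum ≤ (k :: l).length • M := List.sum_le_card_nsmul _ _ hbound
      _ = r * M := by rw [← hkl, hlen]; simp [Nat.mul_comm]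
      _ ≤ n := hM
  · rw [← hkl]; exact Finset.pairwise_sort ..
  · have h1 : ((k :: l).map (fun k : ℕ => d * k + 1)).prod = ∏ k ∈ s, (d*k+1) := by
      rw [← hkl]
      have hperm : List.Perm (L.map (fun k : ℕ => d * k + 1))
          (s.toList.map (fun k : ℕ => d * k + 1)) :=
        (Finset.sort_perm_toList _ _).map _
      rw [hperm.prod_eq, Finset.prod_map_toList]
    simp only [List.map_cons, List.prod_cons] at h1
    rw [foldl_mul_eq, ← h1]

-- upper bound: WrSet ⊆ Icc 1 (d*n+1)^r
lemma WrSet_subset (d r n : ℕ) :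
    WrSet (fun k : ℕ => d * k + 1) r n ⊆ Set.Icc 1 ((d*n+1)^r) := by
  rintro x ⟨k, l, hlen, hpos, hsum, -, hx0⟩
  rw [foldl_mul_eq, ← List.prod_cons] at hx0
  have hx : x = ((k :: l).map (fun k : ℕ => d * k + 1)).prod := by
    rw [hx0]; simp only [List.map_cons]
  constructor
  · rw [hx]
    apply List.one_le_prod_of_one_le
    intro y hy
    simp only [List.mem_map] at hy
    obtain ⟨a, -, rfl⟩ := hy
    omega
  · rw [hx]
    calc ((k :: l).map (fun k : ℕ => d * k + 1)).prod
        ≤ (d*n+1) ^ ((k :: l).map (fun k : ℕ => d * k + 1)).length := by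
          apply List.prod_le_pow_card
          intro y hy
          simp only [List.mem_map] at hy
          obtain ⟨a, ha, rfl⟩ := hy
          have h1 : a ≤ (k :: l).sum := List.le_sum_of_mem ha
          have h2 : a ≤ n := le_trans h1 hsum
          have := Nat.mul_le_mul_left d h2
          omega
      _ = (d*n+1)^r := by rw [List.length_map, hlen]

-- main counting inequality
lemma main_count (d r n : ℕ) (hd : 1 ≤ d) (hr : 1 ≤ r) :
    (n / r).choose r ≤ (64^(r*r*(r*r)*2^(r*r)) * (d*n+1)) * (WrSet (fun k : ℕ => d * k + 1) r n).ncard := by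
  set M := n / r with hM
  set w := fun k : ℕ => d * k + 1 with hw
  set D := Finset.powersetCard r (Finset.Icc 1 M) with hD
  set f := fun s : Finset ℕ => ∏ k ∈ s, (d*k+1) with hf
  set G := 64^(r*r*(r*r)*2^(r*r)) * (d*n+1) with hG
  have hMn : r * M ≤ n := by rw [hM, Nat.mul_comm]; exact Nat.div_mul_le_self n r
  -- fiber bound
  have hfiber : ∀ b ∈ D.image f, (D.filter (fun s => f s = b)).card ≤ G := by
    intro b hb
    obtain ⟨s₀, hs₀, rfl⟩ := Finset.mem_image.1 hb
    set P := f s₀ with hP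
    have hs₀' := Finset.mem_powersetCard.1 hs₀
    have hPpos : 1 ≤ P := by
      rw [hP, hf]
      apply Finset.one_le_prod'
      intro k hk; omega
    have hPne : P ≠ 0 := by omega
    have hPle : P ≤ (d*n+1)^r := by
      rw [hP, hf]
      calc ∏ k ∈ s₀, (d*k+1) ≤ (d*n+1) ^ s₀.card := by
            apply Finset.prod_le_pow_card
            intro k hk
            have := Finset.mem_Icc.1 (hs₀'.1 hk)
            have hkM : k ≤ M := this.2
            have h2 : k ≤ n := le_trans hkM (by rw [hM]; exact Nat.div_le_self n r)
            have := Nat.mul_le_mul_left d h2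
            omega
        _ = (d*n+1)^r := by rw [hs₀'.2]
    set Dv := (Finset.Icc 1 M).filter (fun k => d*k+1 ∣ P) with hDv
    have hsubfiber : D.filter (fun s => f s = P) ⊆ Dv.powersetCard r := by
      intro t ht
      simp only [Finset.mem_filter, hD, Finset.mem_powersetCard] at ht ⊢
      obtain ⟨⟨htsub, htcard⟩, htP⟩ := ht
      refine ⟨?_, htcard⟩
      intro k hk
      rw [hDv, Finset.mem_filter]
      refine ⟨htsub hk, ?_⟩
      rw [← htP, hf]
      exact Finset.dvd_prod_of_mem _ hk
    have hDvcard : Dv.card ≤ P.divisors.card := by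
      apply Finset.card_le_card_of_injOn (fun k => d*k+1)
      · intro k hk
        rw [Finset.mem_coe, Finset.mem_filter] at hk
        exact Nat.mem_divisors.2 ⟨hk.2, hPne⟩
      · intro a _ b _ hab
        simp only at hab
        have h2 : d*a = d*b := by omega
        exact Nat.eq_of_mul_eq_mul_left (by omega) h2
    have htau : P.divisors.card ^ r ≤ G := by
      have h1 : (P.divisors.card ^ r) ^ r ≤ G ^ r := by
        calc (P.divisors.card ^ r) ^ r = (P.divisors.card) ^ (r*r) := by rw [← pow_mul]
          _ ≤ 64^(r*r*(r*r)*2^(r*r)) * P := by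
              have := tau_pow (r*r) P (by nlinarith) hPne
              convert this using 3 <;> ring
          _ ≤ 64^(r*r*(r*r)*2^(r*r)) * (d*n+1)^r := Nat.mul_le_mul_left _ hPle
          _ ≤ (64^(r*r*(r*r)*2^(r*r)))^r * (d*n+1)^r := by
              apply Nat.mul_le_mul_right
              exact Nat.le_self_pow (by omega) _
          _ = G ^ r := by rw [hG, mul_pow]
      exact (Nat.pow_le_pow_iff_left (by omega)).1 h1
    calc (D.filter (fun s => f s = P)).card ≤ (Dv.powersetCard r).card :=
          Finset.card_le_card hsubfiber
      _ = Dv.card.choose r := Finset.card_powersetCard _ _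
      _ ≤ Dv.card ^ r := Nat.choose_le_pow _ _
      _ ≤ P.divisors.card ^ r := Nat.pow_le_pow_left hDvcard r
      _ ≤ G := htau
  have hcount : D.card ≤ G * (D.image f).card := Finset.card_le_mul_card_image D G hfiber
  have himg : ↑(D.image f) ⊆ WrSet w r n := by
    intro x hx
    simp only [Finset.coe_image, Set.mem_image, Finset.mem_coe] at hx
    obtain ⟨s, hs, rfl⟩ := hx
    exact mem_WrSet_of_subset hr hMn s hs
  have hfin : (WrSet w r n).Finite :=
    Set.Finite.subset (Set.finite_Icc _ _) (WrSet_subset d r n)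
  have hncard : (D.image f).card ≤ (WrSet w r n).ncard := by
    rw [← Set.ncard_coe_finset]
    exact Set.ncard_le_ncard himg hfin
  calc M.choose r = (Finset.Icc 1 M).card.choose r := by rw [Nat.card_Icc]; norm_num
    _ = D.card := (Finset.card_powersetCard _ _).symm
    _ ≤ G * (D.image f).card := hcount
    _ ≤ G * (WrSet w r n).ncard := Nat.mul_le_mul_left _ hncard

-- eventual upper bound on a n
lemma a_upper (d r : ℕ) (hr : 1 ≤ r) : ∀ᶠ n : ℕ in atTop,
    Real.log (Set.ncard (WrSet (fun k : ℕ => d * k + 1) r n)) / Real.log n ≤ (2*r : ℝ) := by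
  filter_upwards [eventually_ge_atTop 2, eventually_ge_atTop (d+1)] with n hn2 hnd
  have hlogn : (0:ℝ) < Real.log n := Real.log_pos (by exact_mod_cast hn2)
  rw [div_le_iff₀ hlogn]
  set c := Set.ncard (WrSet (fun k : ℕ => d * k + 1) r n) with hc
  have hcle : c ≤ n^(2*r) := by
    have h1 : c ≤ (Set.Icc 1 ((d*n+1)^r)).ncard :=
      Set.ncard_le_ncard (WrSet_subset d r n) (Set.finite_Icc _ _)
    have h2 : (Set.Icc 1 ((d*n+1)^r)).ncard = (d*n+1)^r := by
      rw [← Finset.coe_Icc, Set.ncard_coe_finset, Nat.card_Icc]; omega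
    have h3 : d*n+1 ≤ n^2 := by
      have : (d+1)*n ≤ n*n := Nat.mul_le_mul_right n hnd
      calc d*n+1 ≤ d*n + n := by omega
        _ = (d+1)*n := by ring
        _ ≤ n*n := this
        _ = n^2 := by ring
    calc c ≤ (d*n+1)^r := by rw [← h2]; exact h1
      _ ≤ (n^2)^r := Nat.pow_le_pow_left h3 r
      _ = n^(2*r) := by rw [← pow_mul]
  rcases Nat.eq_zero_or_pos c with h0 | hpos
  · rw [h0]
    simp only [Nat.cast_zero, Real.log_zero]
    positivity
  · have : Real.log c ≤ Real.log (n^(2*r) : ℕ) := by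
      apply Real.log_le_log (by exact_mod_cast hpos)
      exact_mod_cast hcle
    calc Real.log c ≤ Real.log ((n : ℝ)^(2*r)) := by rw [← Nat.cast_pow]; exact this
      _ = (2*r : ℕ) * Real.log n := Real.log_pow _ _
      _ = (2*r : ℝ) * Real.log n := by push_cast; ring

lemma phi_lower (d r : ℕ) (hd : 1 ≤ d) (hr : 1 ≤ r) :
    (r : ℝ) - 3 ≤ Phi (fun k : ℕ => d * k + 1) r := by
  set w := fun k : ℕ => d * k + 1 with hw
  set C64 : ℕ := 64^(r*r*(r*r)*2^(r*r)) with hC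
  set B : ℝ := r * Real.log (2*r) + Real.log (Nat.factorial r) + Real.log C64 with hB
  apply le_liminf_of_le
  · exact isCoboundedUnder_ge_of_eventually_le atTop (a_upper d r hr)
  · have hlogB : ∀ᶠ n : ℕ in atTop, B ≤ Real.log n := by
      have h := Real.tendsto_log_atTop.comp (tendsto_natCast_atTop_atTop (R := ℝ))
      exact h.eventually_ge_atTop B
    filter_upwards [eventually_ge_atTop 2, eventually_ge_atTop (d+1),
      eventually_ge_atTop (4*r*r + 4*r), hlogB] with n hn2 hnd hnr hlog
    have hlogn : (0:ℝ) < Real.log n := Real.log_pos (by exact_mod_cast hn2)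
    set M := n / r with hM
    set K := M + 1 - r with hK
    set c := Set.ncard (WrSet w r n) with hc
    -- M bounds
    have hMr : r ≤ M := by
      rw [hM]
      apply (Nat.le_div_iff_mul_le (by omega)).2
      nlinarith
    have hMreal : ((n : ℝ) - r + 1) / r ≤ (M : ℝ) := by
      have hrle : r ≤ n := by nlinarith
      have h1 : n - r + 1 ≤ M * r := by
        have h2 := Nat.div_add_mod n r
        have h3 : n % r < r := Nat.mod_lt _ (by omega)
        have e : M * r = r * (n/r) := by rw [hM]; ring
        omega
      rw [div_le_iff₀ (by positivity)]
      have h4 : ((n - r + 1 : ℕ) : ℝ) ≤ ((M * r : ℕ) : ℝ) := by exact_mod_cast h1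
      rw [Nat.cast_add, Nat.cast_sub hrle] at h4
      push_cast at h4
      linarith
    have hKreal : (n : ℝ) / (2*r) ≤ (K : ℝ) := by
      have hKc : (K : ℝ) = (M : ℝ) + 1 - r := by
        rw [hK]; push_cast [Nat.cast_sub (by omega : r ≤ M + 1)]; ring
      rw [hKc, div_le_iff₀ (by positivity)]
      have hrn : (4*r*r + 4*r : ℝ) ≤ n := by exact_mod_cast hnr
      have h1 : ((n : ℝ) - r + 1) / r ≤ (M : ℝ) := hMreal
      rw [div_le_iff₀ (by positivity : (0:ℝ) < (r:ℝ))] at h1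
      nlinarith [hr, (by exact_mod_cast hr : (1:ℝ) ≤ (r:ℝ))]
    have hKpos : (0:ℝ) < K := lt_of_lt_of_le (by positivity) hKreal
    -- counting
    have hcount : M.choose r ≤ C64 * (d*n+1) * c := main_count d r n hd hr
    have hchoosepos : 0 < M.choose r := Nat.choose_pos hMr
    have hcpos : 0 < c := by
      rcases Nat.eq_zero_or_pos c with h0 | h
      · rw [h0, Nat.mul_zero] at hcount; omega
      · exact h
    have hGpos : (0:ℝ) < (C64 : ℝ) * ((d:ℝ)*n+1) := by positivity
    have hcountR : ((M.choose r : ℕ) : ℝ) ≤ ((C64 : ℝ) * ((d:ℝ)*n+1)) * c := by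
      calc ((M.choose r : ℕ) : ℝ) ≤ ((C64 * (d*n+1)) * c : ℕ) := by exact_mod_cast hcount
        _ = ((C64 : ℝ) * ((d:ℝ)*n+1)) * c := by push_cast; ring
    have hKfact : ((K : ℝ))^r ≤ (M.choose r : ℝ) * (Nat.factorial r) := by
      have h := Nat.pow_le_choose (α := ℝ) r M
      rw [← hK] at h
      rw [div_le_iff₀ (by positivity)] at h
      push_cast at h
      exact h
    have hclower : ((K : ℝ))^r / ((Nat.factorial r) * ((C64 : ℝ) * ((d:ℝ)*n+1))) ≤ (c : ℝ) := by
      rw [div_le_iff₀ (by positivity)]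
      calc ((K:ℝ))^r ≤ (M.choose r : ℝ) * (Nat.factorial r) := hKfact
        _ ≤ (((C64 : ℝ) * ((d:ℝ)*n+1)) * c) * (Nat.factorial r) :=
            mul_le_mul_of_nonneg_right hcountR (by positivity)
        _ = (c : ℝ) * ((Nat.factorial r) * ((C64 : ℝ) * ((d:ℝ)*n+1))) := by ring
    -- logs
    have hlogc : (r : ℝ) * Real.log ((n:ℝ)/(2*r)) - Real.log (Nat.factorial r)
        - Real.log C64 - Real.log ((d:ℝ)*n+1) ≤ Real.log c := by
      have h1 : Real.log (((K : ℝ))^r / ((Nat.factorial r) * ((C64 : ℝ) * ((d:ℝ)*n+1))))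
          ≤ Real.log c := Real.log_le_log (by positivity) hclower
      rw [Real.log_div (by positivity) (by positivity), Real.log_pow,
        Real.log_mul (by positivity) (by positivity),
        Real.log_mul (by positivity) (by positivity)] at h1
      have h2 : Real.log ((n:ℝ)/(2*r)) ≤ Real.log K := Real.log_le_log (by positivity) hKreal
      nlinarith [mul_le_mul_of_nonneg_left h2 (by positivity : (0:ℝ) ≤ (r:ℝ))]
    have hdn : Real.log ((d:ℝ)*n+1) ≤ 2 * Real.log n := by
      have h4 : d*n+1 ≤ n^2 := by
        have h5 : (d+1)*n ≤ n*n := Nat.mul_le_mul_right n hnd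
        calc d*n+1 ≤ d*n + n := by omega
          _ = (d+1)*n := by ring
          _ ≤ n*n := h5
          _ = n^2 := by ring
      have h3 : (d:ℝ)*n+1 ≤ (n:ℝ)^2 := by exact_mod_cast h4
      calc Real.log ((d:ℝ)*n+1) ≤ Real.log ((n:ℝ)^2) := Real.log_le_log (by positivity) h3
        _ = 2 * Real.log n := by rw [Real.log_pow]; push_cast; ring
    -- combine
    rw [le_div_iff₀ hlogn]
    have hsplit : Real.log ((n:ℝ)/(2*r)) = Real.log n - Real.log (2*r) :=
      Real.log_div (by positivity) (by positivity)
    rw [hsplit] at hlogc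
    have hexp : (r:ℝ) * (Real.log n - Real.log (2*(r:ℝ))) =
        (r:ℝ) * Real.log n - (r:ℝ) * Real.log (2*(r:ℝ)) := by ring
    rw [hexp] at hlogc
    have hBval : B = (r:ℝ) * Real.log (2*(r:ℝ)) + Real.log (Nat.factorial r) + Real.log C64 := hB
    linarith [hlogc, hdn, hlog]


theorem stmt7 (d : ℕ) (hd : 0 < d) :
    ManyPartitionProducts (fun k : ℕ => d * k + 1) := by

  unfold ManyPartitionProducts
  apply tendsto_atTop_mono' atTop
  · filter_upwards [eventually_ge_atTop 1] with r hr
    exact phi_lower d r hd hr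
  · have h1 : Filter.Tendsto (fun r : ℕ => (r : ℝ) + (-3)) atTop atTop :=
      tendsto_atTop_add_const_right atTop (-3) (tendsto_natCast_atTop_atTop (R := ℝ))
    simpa [sub_eq_add_neg] using h1
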